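/- Let K be a field, n ≥ 2, and suppose u₁,…,u_{n-1} form a basis of V₂ = span(e₂,…,eₙ) ⊆ Kⁿ, with scalars t₁,…,t_{n-1} ∈ K. Let ψ : V₂ → K be the linear functional with ψ(uᵢ) = tᵢ. For x ∈ K× and q ∈ K with x^{-(n-1)} - x = q·s (for a fixed s ∈ K×), define S_x(t e₁ + u) = (x^{-(n-1)} t - q s ψ(u)) e₁ + x u. Then S_x ∈ SL_n(K), S_x fixes the line K·e₁, and S_x fixes each line K·(uᵢ + tᵢ e₁). -/

import Mathlib

/-- Let `K` be a field, `n ≥ 2`, and `u₁, …, u_{n-1}` a basis of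
`V₂ = span(e₂,…,eₙ) ⊆ Kⁿ`, with scalars `tᵢ ∈ K`. Let `ψ` be the linear functional on
`V₂` (extended to `Kⁿ` by `ψ(e₁) = 0`) with `ψ(uᵢ) = tᵢ`. For `x ∈ K×` and `q ∈ K` with
`x^{-(n-1)} - x = q·s` (for a fixed `s ∈ K×`), the map
`S_x(t e₁ + u) = (x^{-(n-1)} t - q s ψ(u)) e₁ + x u` is an element of `SL_n(K)` fixing
the line `K·e₁` and each line `K·(uᵢ + tᵢ e₁)`. -/
theorem stmt_17 (K : Type*) [Field K] (n : ℕ) (hn : 2 ≤ n)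
    (u : Fin (n - 1) → (Fin n → K)) (hu : ∀ i, u i ⟨0, by omega⟩ = 0)
    (hli : LinearIndependent K u)
    (hspan : Submodule.span K (Set.range u) =
      LinearMap.ker (LinearMap.proj (⟨0, by omega⟩ : Fin n) : (Fin n → K) →ₗ[K] K))
    (t : Fin (n - 1) → K)
    (ψ : (Fin n → K) →ₗ[K] K)
    (hψe : ψ (Pi.single (⟨0, by omega⟩ : Fin n) 1) = 0)
    (hψu : ∀ i, ψ (u i) = t i)
    (x : Kˣ) (q s : K) (hs : s ≠ 0)
    (hq : ((x⁻¹ : Kˣ) : K) ^ (n - 1) - (x : K) = q * s) :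
    ∃ g : Matrix.SpecialLinearGroup (Fin n) K,
      (∀ (c : K) (v : Fin n → K), v ⟨0, by omega⟩ = 0 →
        (g : Matrix (Fin n) (Fin n) K).mulVec
            (c • (Pi.single (⟨0, by omega⟩ : Fin n) 1 : Fin n → K) + v)
          = (((x⁻¹ : Kˣ) : K) ^ (n - 1) * c - q * s * ψ v) •
              (Pi.single (⟨0, by omega⟩ : Fin n) 1 : Fin n → K) + (x : K) • v) ∧
      Submodule.map (Matrix.mulVecLin (g : Matrix (Fin n) (Fin n) K))
          (Submodule.span K {(Pi.single (⟨0, by omega⟩ : Fin n) 1 : Fin n → K)})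
        = Submodule.span K {(Pi.single (⟨0, by omega⟩ : Fin n) 1 : Fin n → K)} ∧
      ∀ i : Fin (n - 1),
        Submodule.map (Matrix.mulVecLin (g : Matrix (Fin n) (Fin n) K))
            (Submodule.span K
              {u i + t i • (Pi.single (⟨0, by omega⟩ : Fin n) 1 : Fin n → K)})
          = Submodule.span K
              {u i + t i • (Pi.single (⟨0, by omega⟩ : Fin n) 1 : Fin n → K)} := by
  set z : Fin n := ⟨0, by omega⟩ with hzdef
  set e : Fin n → K := Pi.single z 1 with he
  set a : K := ((x⁻¹ : Kˣ) : K) ^ (n - 1) with ha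
  set M : Matrix (Fin n) (Fin n) K :=
    Matrix.of fun i j =>
      if i = z then (if j = z then a else -(q * s * ψ (Pi.single j 1)))
      else if i = j then (x : K) else 0 with hM
  have hdet : M.det = 1 := by
    have htri : M.BlockTriangular id := by
      intro i j hij
      have hij' : (j : ℕ) < (i : ℕ) := hij
      have hiz : i ≠ z := by
        intro h
        rw [h] at hij'
        simp [hzdef] at hij'
      have hijne : i ≠ j := by
        intro h; rw [h] at hij'; omega
      simp [hM, hiz, hijne]
    rw [Matrix.det_of_upperTriangular htri]
    have hdiag : ∀ i ∈ Finset.univ.erase z, M i i = (x : K) := by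
      intro i hi
      have hiz : i ≠ z := (Finset.mem_erase.mp hi).1
      simp [hM, hiz]
    calc ∏ i, M i i
        = M z z * ∏ i ∈ Finset.univ.erase z, M i i :=
          (Finset.mul_prod_erase _ _ (Finset.mem_univ z)).symm
      _ = a * (x : K) ^ (n - 1) := by
          have hzz : M z z = a := by simp [hM]
          rw [Finset.prod_congr rfl hdiag, Finset.prod_const, hzz,
            Finset.card_erase_of_mem (Finset.mem_univ z), Finset.card_univ,
            Fintype.card_fin]
      _ = 1 := by
          rw [ha, ← mul_pow, ← Units.val_mul]
          simp
  have key : ∀ (c : K) (v : Fin n → K), v z = 0 →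
      M.mulVec (c • e + v) = (a * c - q * s * ψ v) • e + (x : K) • v := by
    intro c v hv
    have hψsum : ∀ w : Fin n → K, ψ w = ∑ j, w j * ψ (Pi.single j 1) := by
      intro w
      rw [LinearMap.pi_apply_eq_sum_univ]
      refine Finset.sum_congr rfl fun j _ => ?_
      have hsingle : (fun k => if j = k then (1:K) else 0) = Pi.single j 1 := by
        funext k
        simp [Pi.single_apply, eq_comm]
      rw [hsingle, smul_eq_mul]
    funext i
    by_cases hiz : i = z
    · have hrow : ∀ j, M i j = (if j = z then a else 0) - q * s * ψ (Pi.single j 1) := by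
        intro j
        by_cases hj : j = z
        · simp [hM, hiz, hj, ← he, hψe]
        · simp [hM, hiz, hj]
      have lhs : M.mulVec (c • e + v) i
          = ∑ j, ((if j = z then a else 0) - q * s * ψ (Pi.single j 1)) * (c • e + v) j := by
        simp only [Matrix.mulVec, dotProduct]
        refine Finset.sum_congr rfl fun j _ => ?_
        show M i j * _ = _
        rw [hrow]
      rw [lhs]
      have hsplit : ∀ j, ((if j = z then a else 0) - q * s * ψ (Pi.single j 1)) * (c • e + v) j
          = (if j = z then a * (c • e + v) j else 0)
            - q * s * (ψ (Pi.single j 1) * (c • e + v) j) := by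
        intro j
        by_cases hj : j = z <;> simp [hj] <;> ring
      rw [Finset.sum_congr rfl fun j _ => hsplit j, Finset.sum_sub_distrib,
        Finset.sum_ite_eq' Finset.univ z, ← Finset.mul_sum]
      have hei : e z = 1 := by simp [he]
      have hψw : ψ (c • e + v) = ψ v := by
        rw [map_add, map_smul, hψe, smul_zero, zero_add]
      have hsum2 : ∑ j, ψ (Pi.single j 1) * (c • e + v) j = ψ v := by
        rw [← hψw, hψsum (c • e + v)]
        exact Finset.sum_congr rfl fun j _ => mul_comm _ _
      rw [hsum2]
      rw [hiz]
      simp [hei, hv]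
    · have hrow : ∀ j, M i j = if i = j then (x : K) else 0 := by
        intro j; simp [hM, hiz]
      have lhs : M.mulVec (c • e + v) i
          = ∑ j, (if i = j then (x : K) else 0) * (c • e + v) j := by
        simp only [Matrix.mulVec, dotProduct]
        refine Finset.sum_congr rfl fun j _ => ?_
        show M i j * _ = _
        rw [hrow]
      rw [lhs]
      have hif : ∀ j, (if i = j then (x : K) else 0) * (c • e + v) j
          = if i = j then (x : K) * (c • e + v) j else 0 := by
        intro j; by_cases hj : i = j <;> simp [hj]
      rw [Finset.sum_congr rfl fun j _ => hif j, Finset.sum_ite_eq Finset.univ i]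
      have hei : e i = 0 := by simp [he, Pi.single_eq_of_ne hiz]
      simp [hei]
  refine ⟨⟨M, hdet⟩, ?_, ?_, ?_⟩
  · exact fun c v hv => key c v hv
  · have h1 : M.mulVec e = a • e := by
      have h := key 1 0 rfl
      simpa using h
    rw [Submodule.map_span, Set.image_singleton]
    have h2 : Matrix.mulVecLin M e = a • e := by
      rw [Matrix.mulVecLin_apply, h1]
    rw [h2]
    have hau : IsUnit a := by
      rw [ha, ← Units.val_pow_eq_pow_val]
      exact Units.isUnit _
    exact Submodule.span_singleton_smul_eq hau e
  · intro i
    have hx : a - q * s = (x : K) := by linear_combination hq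
    have h1 : M.mulVec (u i + t i • e) = (x : K) • (u i + t i • e) := by
      rw [add_comm (u i), key (t i) (u i) (hu i), hψu i, smul_add, smul_smul]
      have hsc : a * t i - q * s * t i = (x : K) * t i := by
        rw [← sub_mul, hx]
      rw [hsc, add_comm]
    rw [Submodule.map_span, Set.image_singleton, Matrix.mulVecLin_apply, h1]
    exact Submodule.span_singleton_smul_eq x.isUnit _
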